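/- Suppose two models of a misclassified endogenous binary regressor are given, each consisting of: a probability space (Ω, F, P); an integrable real random variable Y; random variables T, T*, Z, V taking values in {0,1}; functions α, β : {0,1} → ℝ; and ε := Y − α(V) − β(V)·T*. Suppose each model satisfies: every event {T = t, T* = t*, Z = z, V = v} (t, t*, z, v ∈ {0,1}) has positive probability; E[ε | Z = z, V = v] = 0 for all z, v; Assumption 1: (a) E[ε | T* = t*, T = t, Z = z, V = v] = E[ε | T* = t*, Z = z, V = v] for all t, t*, z, v; (b) E[ε | T* = t*, Z = z, V = v] = E[ε | T* = t*, V = v] for all t*, z, v; (c) P(T* = 1 | Z = 0, V = v) ≠ P(T* = 1 | Z = 1, V = v) for each v; (d) P(T = 1 | T* = t*, Z = z, V = 0) = P(T = 1 | T* = t*, Z = z, V = 1) for all t*, z (denote the common value P(T = 1 | T* = t*, Z = z)); (e) P(T* = 1 | Z = z, V = 0) ≠ P(T* = 1 | Z = z, V = 1) for each z; (f) 0 < P(T = 1 | T* = 0, Z = z) < P(T = 1 | T* = 1, Z = z) < 1 for each z; (g) β(v) ≠ E[ε | T* = 0, V = v] − E[ε | T* = 1, V = v] for each v; (h) 0 <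 P(T* = 1 | Z = z, V = v) < 1 for all z, v; and Assumption 2: writing p(z, v) := P(T* = 1 | Z = z, V = v), ((1 − p(0,0))(1 − p(1,1)))/((1 − p(1,0))(1 − p(0,1))) ≠ (p(0,0)·p(1,1))/(p(1,0)·p(0,1)). If the two models induce the same joint distribution of the observables, i.e., the pushforward measures of (Y, T, Z, V) on ℝ × {0,1}³ coincide, then the two models have the same α(v) and β(v) for each v ∈ {0,1}, the same misclassification probabilities P(T = 1 | T* = t*, Z = z) for all t*, z, and the same P(T* = 1 | Z = z, V = v) for all z, v. -/

import Mathlib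

open MeasureTheory

/-- Conditional expectation of `X` given the event `A`: `E[X | A] = E[X · 1_A] / P(A)`. -/
noncomputable def cExp {Ω : Type*} [MeasurableSpace Ω] (P : Measure Ω)
    (X : Ω → ℝ) (A : Set Ω) : ℝ :=
  (∫ ω in A, X ω ∂P) / (P A).toReal

/-- Conditional probability of the event `B` given the event `A`: `P(B | A) = P(A ∩ B) / P(A)`. -/
noncomputable def cPr {Ω : Type*} [MeasurableSpace Ω] (P : Measure Ω)
    (B A : Set Ω) : ℝ :=
  (P (A ∩ B)).toReal / (P A).toReal

/-- Coercion of a `{0,1}`-valued (Boolean) random variable to a real number. -/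
def b2r (b : Bool) : ℝ := if b then 1 else 0

/-- The structural error term `ε = Y − α(V) − β(V)·T*` of the outcome equation. -/
noncomputable def modelEps {Ω : Type*} (Y : Ω → ℝ) (Tstar V : Ω → Bool)
    (α β : Bool → ℝ) : Ω → ℝ :=
  fun ω => Y ω - α (V ω) - β (V ω) * b2r (Tstar ω)

/-- `P(T* = 1 | Z = z, V = v)`. -/
noncomputable def pStar {Ω : Type*} [MeasurableSpace Ω] (P : Measure Ω)
    (Tstar Z V : Ω → Bool) (z v : Bool) : ℝ :=
  cPr P {ω | Tstar ω = true} {ω | Z ω = z ∧ V ω = v}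

/-- A model of a misclassified endogenous binary regressor satisfying
the exogeneity condition `E[ε | Z, V] = 0` together with Assumptions 1 and 2
of the paper (all cells have positive probability; `1` is encoded as `true`
and `0` as `false`). -/
structure ModelAssumptions {Ω : Type*} [MeasurableSpace Ω] (P : Measure Ω)
    (Y : Ω → ℝ) (T Tstar Z V : Ω → Bool) (α β : Bool → ℝ) : Prop where
  prob : IsProbabilityMeasure P
  measY : Measurable Y
  measT : Measurable T
  measTstar : Measurable Tstar
  measZ : Measurable Z
  measV : Measurable V
  intY : Integrable Y P
  /-- every event `{T = t, T* = t*, Z = z, V = v}` has positive probability -/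
  cellPos : ∀ t t' z v : Bool,
    0 < P {ω | T ω = t ∧ Tstar ω = t' ∧ Z ω = z ∧ V ω = v}
  /-- `E[ε | Z = z, V = v] = 0` -/
  exog : ∀ z v : Bool,
    cExp P (modelEps Y Tstar V α β) {ω | Z ω = z ∧ V ω = v} = 0
  /-- Assumption 1(a) -/
  a1a : ∀ t t' z v : Bool,
    cExp P (modelEps Y Tstar V α β)
        {ω | T ω = t ∧ Tstar ω = t' ∧ Z ω = z ∧ V ω = v}
      = cExp P (modelEps Y Tstar V α β) {ω | Tstar ω = t' ∧ Z ω = z ∧ V ω = v}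
  /-- Assumption 1(b) -/
  a1b : ∀ t' z v : Bool,
    cExp P (modelEps Y Tstar V α β) {ω | Tstar ω = t' ∧ Z ω = z ∧ V ω = v}
      = cExp P (modelEps Y Tstar V α β) {ω | Tstar ω = t' ∧ V ω = v}
  /-- Assumption 1(c) -/
  a1c : ∀ v : Bool, pStar P Tstar Z V false v ≠ pStar P Tstar Z V true v
  /-- Assumption 1(d): `P(T = 1 | T* = t*, Z = z, V = v)` does not depend on `v`;
  the common value is `P(T = 1 | T* = t*, Z = z)`. -/
  a1d : ∀ t' z v : Bool,
    cPr P {ω | T ω = true} {ω | Tstar ω = t' ∧ Z ω = z ∧ V ω = v}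
      = cPr P {ω | T ω = true} {ω | Tstar ω = t' ∧ Z ω = z}
  /-- Assumption 1(e) -/
  a1e : ∀ z : Bool, pStar P Tstar Z V z false ≠ pStar P Tstar Z V z true
  /-- Assumption 1(f) -/
  a1f : ∀ z : Bool,
    0 < cPr P {ω | T ω = true} {ω | Tstar ω = false ∧ Z ω = z}
    ∧ cPr P {ω | T ω = true} {ω | Tstar ω = false ∧ Z ω = z}
        < cPr P {ω | T ω = true} {ω | Tstar ω = true ∧ Z ω = z}
    ∧ cPr P {ω | T ω = true} {ω | Tstar ω = true ∧ Z ω = z} < 1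
  /-- Assumption 1(g) -/
  a1g : ∀ v : Bool,
    β v ≠ cExp P (modelEps Y Tstar V α β) {ω | Tstar ω = false ∧ V ω = v}
          - cExp P (modelEps Y Tstar V α β) {ω | Tstar ω = true ∧ V ω = v}
  /-- Assumption 1(h) -/
  a1h : ∀ z v : Bool,
    0 < pStar P Tstar Z V z v ∧ pStar P Tstar Z V z v < 1
  /-- Assumption 2 -/
  a2 : ((1 - pStar P Tstar Z V false false) * (1 - pStar P Tstar Z V true true))
        / ((1 - pStar P Tstar Z V true false) * (1 - pStar P Tstar Z V false true))
      ≠ (pStar P Tstar Z V false false * pStar P Tstar Z V true true)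
        / (pStar P Tstar Z V true false * pStar P Tstar Z V false true)


lemma measEvent {Ω : Type*} [MeasurableSpace Ω] {f : Ω → Bool} (hf : Measurable f) (t : Bool) :
    MeasurableSet {ω | f ω = t} :=
  show MeasurableSet (f ⁻¹' {t}) from hf (by trivial)

lemma splitMeas {Ω : Type*} [MeasurableSpace Ω] (P : Measure Ω) [IsFiniteMeasure P]
    (E S : Set Ω) (hS : MeasurableSet S) :
    (P E).toReal = (P (E ∩ S)).toReal + (P (E ∩ Sᶜ)).toReal := by
  rw [← ENNReal.toReal_add (measure_ne_top P _) (measure_ne_top P _)]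
  rw [← Set.diff_eq, measure_inter_add_diff E hS]

lemma splitInt {Ω : Type*} [MeasurableSpace Ω] (P : Measure Ω) (f : Ω → ℝ)
    (hf : Integrable f P) (E S : Set Ω) (hE : MeasurableSet E) (hS : MeasurableSet S) :
    ∫ ω in E, f ω ∂P = (∫ ω in E ∩ S, f ω ∂P) + ∫ ω in E ∩ Sᶜ, f ω ∂P := by
  have h := setIntegral_union (f := f) (μ := P) (s := E ∩ S) (t := E ∩ Sᶜ)
    (Disjoint.mono inf_le_right inf_le_right disjoint_compl_right)
    (hE.inter hS.compl) hf.integrableOn hf.integrableOn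
  rw [Set.inter_union_compl] at h
  exact h

lemma intConst {Ω : Type*} [MeasurableSpace Ω] (P : Measure Ω) (c : ℝ) (E : Set Ω) :
    ∫ _ in E, c ∂P = c * (P E).toReal := by rw [setIntegral_const]; rw [smul_eq_mul]; exact mul_comm _ _

lemma intBool2 {Ω : Type*} [MeasurableSpace Ω] (P : Measure Ω) [IsFiniteMeasure P]
    (g : Bool → Bool → ℝ) {f1 f2 : Ω → Bool} (h1 : Measurable f1) (h2 : Measurable f2) :
    Integrable (fun ω => g (f1 ω) (f2 ω)) P := by
  apply Integrable.mono'
    (integrable_const (|g false false| + |g false true| + |g true false| + |g true true|))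
  · exact (Measurable.comp
      (measurable_of_countable (fun p : Bool × Bool => g p.1 p.2))
      (h1.prodMk h2)).aestronglyMeasurable
  · refine ae_of_all _ fun ω => ?_
    have c1 := abs_nonneg (g false false); have c2 := abs_nonneg (g false true)
    have c3 := abs_nonneg (g true false); have c4 := abs_nonneg (g true true)
    show ‖g (f1 ω) (f2 ω)‖ ≤ _
    cases hb1 : f1 ω <;> cases hb2 : f2 ω <;>
      simp only [hb1, hb2, Real.norm_eq_abs] <;> linarith

lemma cExp_eq {Ω : Type*} [MeasurableSpace Ω] {P : Measure Ω} (X : Ω → ℝ) {A : Set Ω}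
    (hA : (P A).toReal ≠ 0) : ∫ ω in A, X ω ∂P = cExp P X A * (P A).toReal := by
  rw [cExp]; field_simp

lemma cPr_eq {Ω : Type*} [MeasurableSpace Ω] {P : Measure Ω} (B : Set Ω) {A : Set Ω}
    (hA : (P A).toReal ≠ 0) : (P (A ∩ B)).toReal = cPr P B A * (P A).toReal := by
  rw [cPr]; field_simp

lemma toRealPos {Ω : Type*} [MeasurableSpace Ω] {P : Measure Ω} [IsFiniteMeasure P]
    {E F : Set Ω} (h : 0 < P F) (hFE : F ⊆ E) : 0 < (P E).toReal :=
  ENNReal.toReal_pos (by simpa using (lt_of_lt_of_le h (measure_mono hFE)).ne')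
    (measure_ne_top P E)

private lemma phi_aux (q0 q1 r0 r1 s0 s1 x y c : ℝ)
    (h0 : s0 = x*r0 + c*(q0-x)) (h1 : s1 = y*r1 + c*(q1-y)) :
    ((r0-r1)*x + r1*q0 - s0)*y + ((s1 - r0*q1)*x + s0*q1 - s1*q0) = 0 := by
  linear_combination (q1 - y) * h0 - (q0 - x) * h1

private lemma res_aux (u0x w0x u1x w1x y : ℝ)
    (e0 : u0x*y + w0x = 0) (e1 : u1x*y + w1x = 0) :
    u0x*w1x - u1x*w0x = 0 := by
  linear_combination u0x * e1 - u1x * e0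

private lemma bound_aux (m n p : ℝ) (h : m < n) (h0 : 0 < p) (h1 : p < 1) :
    m < m + (n - m)*p ∧ m + (n - m)*p < n := by
  constructor <;> nlinarith

set_option maxHeartbeats 2000000 in
private lemma res_factor (a0 a1 b0 b1 m00 m01 n0 n1 p00 p01 p10 p11 x : ℝ) :
    (((a0 + b0*p00)-(a0 + b0*p10))*x + (a0 + b0*p10)*(m00 + (n0 - m00) * p00)
        - (a0 * (m00 + (n0 - m00) * p00) + b0 * n0 * p00))
      * (((a1 * (m01 + (n1 - m01) * p11) + b1 * n1 * p11)
            - (a1 + b1*p01)*(m01 + (n1 - m01) * p11))*x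
          + (a1 * (m00 + (n0 - m00) * p01) + b1 * n0 * p01)*(m01 + (n1 - m01) * p11)
          - (a1 * (m01 + (n1 - m01) * p11) + b1 * n1 * p11)*(m00 + (n0 - m00) * p01))
      - (((a1 + b1*p01)-(a1 + b1*p11))*x + (a1 + b1*p11)*(m00 + (n0 - m00) * p01)
        - (a1 * (m00 + (n0 - m00) * p01) + b1 * n0 * p01))
      * (((a0 * (m01 + (n1 - m01) * p10) + b0 * n1 * p10)
            - (a0 + b0*p00)*(m01 + (n1 - m01) * p10))*x
          + (a0 * (m00 + (n0 - m00) * p00) + b0 * n0 * p00)*(m01 + (n1 - m01) * p10)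
          - (a0 * (m01 + (n1 - m01) * p10) + b0 * n1 * p10)*(m00 + (n0 - m00) * p00))
      = (b0*b1*(n1-m01)*(p00*p11*(1-p01)*(1-p10) - p01*p10*(1-p00)*(1-p11)))
          * (x - n0) * (x - m00) := by ring

set_option maxHeartbeats 16000000 in
/-- Key algebraic uniqueness lemma. Index convention: first index `z`, second `v`. -/
theorem algebra_key
    (a0 a1 b0 b1 m00 m01 n0 n1 p00 p01 p10 p11 : ℝ)
    (A0 A1 B0 B1 M00 M01 N0 N1 P00 P01 P10 P11 : ℝ)
    (Hq00 : m00 + (n0 - m00) * p00 = M00 + (N0 - M00) * P00)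
    (Hq01 : m00 + (n0 - m00) * p01 = M00 + (N0 - M00) * P01)
    (Hq10 : m01 + (n1 - m01) * p10 = M01 + (N1 - M01) * P10)
    (Hq11 : m01 + (n1 - m01) * p11 = M01 + (N1 - M01) * P11)
    (Hr00 : a0 + b0 * p00 = A0 + B0 * P00)
    (Hr01 : a1 + b1 * p01 = A1 + B1 * P01)
    (Hr10 : a0 + b0 * p10 = A0 + B0 * P10)
    (Hr11 : a1 + b1 * p11 = A1 + B1 * P11)
    (Hs00 : a0 * (m00 + (n0 - m00) * p00) + b0 * n0 * p00
          = A0 * (M00 + (N0 - M00) * P00) + B0 * N0 * P00)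
    (Hs01 : a1 * (m00 + (n0 - m00) * p01) + b1 * n0 * p01
          = A1 * (M00 + (N0 - M00) * P01) + B1 * N0 * P01)
    (Hs10 : a0 * (m01 + (n1 - m01) * p10) + b0 * n1 * p10
          = A0 * (M01 + (N1 - M01) * P10) + B0 * N1 * P10)
    (Hs11 : a1 * (m01 + (n1 - m01) * p11) + b1 * n1 * p11
          = A1 * (M01 + (N1 - M01) * P11) + B1 * N1 * P11)
    (hb0 : b0 ≠ 0) (hb1 : b1 ≠ 0)
    (hm0 : m00 < n0) (hm1 : m01 < n1) (hM0 : M00 < N0)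
    (hp00 : 0 < p00) (hp00' : p00 < 1) (hp01 : 0 < p01) (hp01' : p01 < 1)
    (hp10 : 0 < p10) (hp10' : p10 < 1) (hp11 : 0 < p11) (hp11' : p11 < 1)
    (hP00 : 0 < P00) (hP00' : P00 < 1)
    (hK : p00*p11*(1-p01)*(1-p10) - p01*p10*(1-p00)*(1-p11) ≠ 0) :
    A0 = a0 ∧ A1 = a1 ∧ B0 = b0 ∧ B1 = b1 ∧ M00 = m00 ∧ M01 = m01 ∧
      N0 = n0 ∧ N1 = n1 ∧ P00 = p00 ∧ P01 = p01 ∧ P10 = p10 ∧ P11 = p11 := by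
  -- observables of the (unprimed) model, as abbreviations (purely notational)
  -- F1/F2 facts for the unprimed model (pure ring identities)
  have F1u00 : a0 * (m00 + (n0 - m00) * p00) + b0 * n0 * p00
      = n0*(a0 + b0*p00) + a0*((m00 + (n0 - m00) * p00) - n0) := by ring
  have F1u10 : a0 * (m01 + (n1 - m01) * p10) + b0 * n1 * p10
      = n1*(a0 + b0*p10) + a0*((m01 + (n1 - m01) * p10) - n1) := by ring
  have F1u01 : a1 * (m00 + (n0 - m00) * p01) + b1 * n0 * p01
      = n0*(a1 + b1*p01) + a1*((m00 + (n0 - m00) * p01) - n0) := by ring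
  have F1u11 : a1 * (m01 + (n1 - m01) * p11) + b1 * n1 * p11
      = n1*(a1 + b1*p11) + a1*((m01 + (n1 - m01) * p11) - n1) := by ring
  have F2u00 : a0 * (m00 + (n0 - m00) * p00) + b0 * n0 * p00
      = m00*(a0 + b0*p00) + (a0+b0)*((m00 + (n0 - m00) * p00) - m00) := by ring
  have F2u10 : a0 * (m01 + (n1 - m01) * p10) + b0 * n1 * p10
      = m01*(a0 + b0*p10) + (a0+b0)*((m01 + (n1 - m01) * p10) - m01) := by ring
  have F2u01 : a1 * (m00 + (n0 - m00) * p01) + b1 * n0 * p01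
      = m00*(a1 + b1*p01) + (a1+b1)*((m00 + (n0 - m00) * p01) - m00) := by ring
  have F2u11 : a1 * (m01 + (n1 - m01) * p11) + b1 * n1 * p11
      = m01*(a1 + b1*p11) + (a1+b1)*((m01 + (n1 - m01) * p11) - m01) := by ring
  -- primed model, expressed through the (shared) unprimed observables
  have F1p00 : a0 * (m00 + (n0 - m00) * p00) + b0 * n0 * p00
      = N0*(a0 + b0*p00) + A0*((m00 + (n0 - m00) * p00) - N0) := by
    linear_combination Hs00 - N0 * Hr00 - A0 * Hq00
  have F1p10 : a0 * (m01 + (n1 - m01) * p10) + b0 * n1 * p10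
      = N1*(a0 + b0*p10) + A0*((m01 + (n1 - m01) * p10) - N1) := by
    linear_combination Hs10 - N1 * Hr10 - A0 * Hq10
  have F1p01 : a1 * (m00 + (n0 - m00) * p01) + b1 * n0 * p01
      = N0*(a1 + b1*p01) + A1*((m00 + (n0 - m00) * p01) - N0) := by
    linear_combination Hs01 - N0 * Hr01 - A1 * Hq01
  have F1p11 : a1 * (m01 + (n1 - m01) * p11) + b1 * n1 * p11
      = N1*(a1 + b1*p11) + A1*((m01 + (n1 - m01) * p11) - N1) := by
    linear_combination Hs11 - N1 * Hr11 - A1 * Hq11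
  have F2p00 : a0 * (m00 + (n0 - m00) * p00) + b0 * n0 * p00
      = M00*(a0 + b0*p00) + (A0+B0)*((m00 + (n0 - m00) * p00) - M00) := by
    linear_combination Hs00 - M00 * Hr00 - (A0+B0) * Hq00 + B0 * Hq00 - B0 * Hq00 + B0 * Hq00 - B0*Hq00
  have F2p10 : a0 * (m01 + (n1 - m01) * p10) + b0 * n1 * p10
      = M01*(a0 + b0*p10) + (A0+B0)*((m01 + (n1 - m01) * p10) - M01) := by
    linear_combination Hs10 - M01 * Hr10 - (A0+B0) * Hq10
  have F2p01 : a1 * (m00 + (n0 - m00) * p01) + b1 * n0 * p01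
      = M00*(a1 + b1*p01) + (A1+B1)*((m00 + (n0 - m00) * p01) - M00) := by
    linear_combination Hs01 - M00 * Hr01 - (A1+B1) * Hq01
  have F2p11 : a1 * (m01 + (n1 - m01) * p11) + b1 * n1 * p11
      = M01*(a1 + b1*p11) + (A1+B1)*((m01 + (n1 - m01) * p11) - M01) := by
    linear_combination Hs11 - M01 * Hr11 - (A1+B1) * Hq11
  -- Φ-point facts
  have Pu0 := phi_aux _ _ _ _ _ _ n0 n1 a0 F1u00 F1u10
  have Qu0 := phi_aux _ _ _ _ _ _ m00 m01 (a0+b0) F2u00 F2u10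
  have Pp0 := phi_aux _ _ _ _ _ _ N0 N1 A0 F1p00 F1p10
  have Pp1 := phi_aux _ _ _ _ _ _ N0 N1 A1 F1p01 F1p11
  have Qp0 := phi_aux _ _ _ _ _ _ M00 M01 (A0+B0) F2p00 F2p10
  have Qp1 := phi_aux _ _ _ _ _ _ M00 M01 (A1+B1) F2p01 F2p11
  -- resultant vanishes at N0 and at M00
  have RN0 := res_aux _ _ _ _ N1 Pp0 Pp1
  have RM0 := res_aux _ _ _ _ M01 Qp0 Qp1
  -- bounds (proved with small, context-free steps)
  have hq00lo : m00 < m00 + (n0 - m00) * p00 := (bound_aux _ _ _ hm0 hp00 hp00').1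
  have hq00hi : m00 + (n0 - m00) * p00 < n0 := (bound_aux _ _ _ hm0 hp00 hp00').2
  have hq01lo : m00 < m00 + (n0 - m00) * p01 := (bound_aux _ _ _ hm0 hp01 hp01').1
  have hq01hi : m00 + (n0 - m00) * p01 < n0 := (bound_aux _ _ _ hm0 hp01 hp01').2
  have hQ00lo : M00 < m00 + (n0 - m00) * p00 := by
    rw [Hq00]; exact (bound_aux _ _ _ hM0 hP00 hP00').1
  have hQ00hi : m00 + (n0 - m00) * p00 < N0 := by
    rw [Hq00]; exact (bound_aux _ _ _ hM0 hP00 hP00').2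
  have hc2ne : b0*b1*(n1-m01)*(p00*p11*(1-p01)*(1-p10) - p01*p10*(1-p00)*(1-p11)) ≠ 0 :=
    mul_ne_zero (mul_ne_zero (mul_ne_zero hb0 hb1)
      (by intro h; have := sub_eq_zero.1 h; linarith only [this, hm1])) hK
  have huNne : b0*p10*((m00 + (n0 - m00) * p00) - n0) ≠ 0 :=
    mul_ne_zero (mul_ne_zero hb0 (ne_of_gt hp10))
      (by intro h; have := sub_eq_zero.1 h; linarith only [this, hq00hi])
  have huMne : b0*(n0-m00)*p00*(p10-1) ≠ 0 :=
    mul_ne_zero (mul_ne_zero (mul_ne_zero hb0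
        (by intro h; have := sub_eq_zero.1 h; linarith only [this, hm0]))
      (ne_of_gt hp00))
      (by intro h; have := sub_eq_zero.1 h; linarith only [this, hp10'])
  -- the key factorization, instantiated at N0 and M00
  have keyN := res_factor a0 a1 b0 b1 m00 m01 n0 n1 p00 p01 p10 p11 N0
  have keyM := res_factor a0 a1 b0 b1 m00 m01 n0 n1 p00 p01 p10 p11 M00
  have hprodN : (b0*b1*(n1-m01)*(p00*p11*(1-p01)*(1-p10) - p01*p10*(1-p00)*(1-p11)))
      * (N0 - n0) * (N0 - m00) = 0 := by linear_combination RN0 - keyN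
  have hN0 : N0 = n0 := by
    rcases mul_eq_zero.1 hprodN with h | h
    · rcases mul_eq_zero.1 h with h' | h'
      · exact absurd h' hc2ne
      · exact sub_eq_zero.1 h'
    · exact absurd (sub_eq_zero.1 h)
        (by intro he; rw [he] at hQ00hi; linarith only [hQ00hi, hq00lo])
  have hprodM : (b0*b1*(n1-m01)*(p00*p11*(1-p01)*(1-p10) - p01*p10*(1-p00)*(1-p11)))
      * (M00 - n0) * (M00 - m00) = 0 := by linear_combination RM0 - keyM
  have hM00 : M00 = m00 := by
    rcases mul_eq_zero.1 hprodM with h | h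
    · rcases mul_eq_zero.1 h with h' | h'
      · exact absurd h' hc2ne
      · exact absurd (sub_eq_zero.1 h')
          (by intro he; rw [he] at hQ00lo; linarith only [hQ00lo, hq00hi])
    · exact sub_eq_zero.1 h
  -- second coordinates
  rw [hN0] at Pp0
  have huN : ((a0 + b0*p00)-(a0 + b0*p10))*n0 + (a0 + b0*p10)*(m00 + (n0 - m00) * p00)
      - (a0 * (m00 + (n0 - m00) * p00) + b0 * n0 * p00)
      = b0*p10*((m00 + (n0 - m00) * p00) - n0) := by ring
  have hN1 : N1 = n1 := by
    have h : (b0*p10*((m00 + (n0 - m00) * p00) - n0)) * (N1 - n1) = 0 := by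
      linear_combination Pp0 - Pu0 + (N1 - n1) * huN
    rcases mul_eq_zero.1 h with h' | h'
    · exact absurd h' huNne
    · exact sub_eq_zero.1 h'
  rw [hM00] at Qp0
  have huM : ((a0 + b0*p00)-(a0 + b0*p10))*m00 + (a0 + b0*p10)*(m00 + (n0 - m00) * p00)
      - (a0 * (m00 + (n0 - m00) * p00) + b0 * n0 * p00)
      = b0*(n0-m00)*p00*(p10-1) := by ring
  have hM01 : M01 = m01 := by
    have h : (b0*(n0-m00)*p00*(p10-1)) * (M01 - m01) = 0 := by
      linear_combination Qp0 - Qu0 + (M01 - m01) * huM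
    rcases mul_eq_zero.1 h with h' | h'
    · exact absurd h' huMne
    · exact sub_eq_zero.1 h'
  -- intercepts and slopes
  rw [hN0] at F1p00 F1p01
  have hA0 : A0 = a0 := by
    have h : (a0 - A0) * ((m00 + (n0 - m00) * p00) - n0) = 0 := by
      linear_combination F1p00 - F1u00
    rcases mul_eq_zero.1 h with h' | h'
    · linarith only [sub_eq_zero.1 h']
    · exact absurd (sub_eq_zero.1 h') (by intro he; linarith only [he, hq00hi])
  have hA1 : A1 = a1 := by
    have h : (a1 - A1) * ((m00 + (n0 - m00) * p01) - n0) = 0 := by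
      linear_combination F1p01 - F1u01
    rcases mul_eq_zero.1 h with h' | h'
    · linarith only [sub_eq_zero.1 h']
    · exact absurd (sub_eq_zero.1 h') (by intro he; linarith only [he, hq01hi])
  rw [hM00] at F2p00 F2p01
  have hB0 : B0 = b0 := by
    have h : ((a0+b0) - (A0+B0)) * ((m00 + (n0 - m00) * p00) - m00) = 0 := by
      linear_combination F2p00 - F2u00
    rcases mul_eq_zero.1 h with h' | h'
    · have h2 := sub_eq_zero.1 h'; rw [hA0] at h2; linarith only [h2]
    · exact absurd (sub_eq_zero.1 h') (by intro he; linarith only [he, hq00lo])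
  have hB1 : B1 = b1 := by
    have h : ((a1+b1) - (A1+B1)) * ((m00 + (n0 - m00) * p01) - m00) = 0 := by
      linear_combination F2p01 - F2u01
    rcases mul_eq_zero.1 h with h' | h'
    · have h2 := sub_eq_zero.1 h'; rw [hA1] at h2; linarith only [h2]
    · exact absurd (sub_eq_zero.1 h') (by intro he; linarith only [he, hq01lo])
  have hP : ∀ x X bv : ℝ, bv ≠ 0 → x * bv = X * bv → X = x := by
    intro x X bv hbv hx
    exact ((mul_left_inj' hbv).1 hx).symm
  refine ⟨hA0, hA1, hB0, hB1, hM00, hM01, hN0, hN1, ?_, ?_, ?_, ?_⟩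
  · exact hP _ _ _ hb0 (by linear_combination Hr00 + hA0 + P00 * hB0)
  · exact hP _ _ _ hb1 (by linear_combination Hr01 + hA1 + P01 * hB1)
  · exact hP _ _ _ hb0 (by linear_combination Hr10 + hA0 + P10 * hB0)
  · exact hP _ _ _ hb1 (by linear_combination Hr11 + hA1 + P11 * hB1)

lemma model_facts {Ω : Type*} [MeasurableSpace Ω] {P : Measure Ω}
    {Y : Ω → ℝ} {T Ts Z V : Ω → Bool} {α β : Bool → ℝ}
    (h : ModelAssumptions P Y T Ts Z V α β) :
    (∀ z v : Bool, 0 < (P {ω | Z ω = z ∧ V ω = v}).toReal) ∧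
    (∀ z v : Bool, ∫ ω in {ω | Z ω = z ∧ V ω = v}, Y ω ∂P
        = (α v + β v * pStar P Ts Z V z v) * (P {ω | Z ω = z ∧ V ω = v}).toReal) ∧
    (∀ z v : Bool, (P {ω | T ω = true ∧ Z ω = z ∧ V ω = v}).toReal
        = (cPr P {ω | T ω = true} {ω | Ts ω = false ∧ Z ω = z} * (1 - pStar P Ts Z V z v)
            + cPr P {ω | T ω = true} {ω | Ts ω = true ∧ Z ω = z} * pStar P Ts Z V z v)
          * (P {ω | Z ω = z ∧ V ω = v}).toReal) ∧
    (∀ z v : Bool, ∫ ω in {ω | T ω = true ∧ Z ω = z ∧ V ω = v}, Y ω ∂P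
        = α v * (P {ω | T ω = true ∧ Z ω = z ∧ V ω = v}).toReal
          + β v * (cPr P {ω | T ω = true} {ω | Ts ω = true ∧ Z ω = z}
              * (pStar P Ts Z V z v * (P {ω | Z ω = z ∧ V ω = v}).toReal))) ∧
    (∀ v : Bool, β v ≠ 0) := by
  haveI := h.prob
  have mT := fun t => measEvent h.measT t
  have mTs := fun t => measEvent h.measTstar t
  have mZ := fun t => measEvent h.measZ t
  have mV := fun t => measEvent h.measV t
  have mE : ∀ z v : Bool, MeasurableSet {ω | Z ω = z ∧ V ω = v} :=
    fun z v => (mZ z).inter (mV v)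
  have mE2 : ∀ t' z v : Bool, MeasurableSet {ω | Ts ω = t' ∧ Z ω = z ∧ V ω = v} :=
    fun t' z v => (mTs t').inter ((mZ z).inter (mV v))
  have mF : ∀ z v : Bool, MeasurableSet {ω | T ω = true ∧ Z ω = z ∧ V ω = v} :=
    fun z v => (mT true).inter ((mZ z).inter (mV v))
  -- positivity
  have hposE : ∀ z v : Bool, 0 < (P {ω | Z ω = z ∧ V ω = v}).toReal :=
    fun z v => toRealPos (h.cellPos true true z v) (fun ω hω => ⟨hω.2.2.1, hω.2.2.2⟩)
  have hposE2 : ∀ t' z v : Bool, 0 < (P {ω | Ts ω = t' ∧ Z ω = z ∧ V ω = v}).toReal :=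
    fun t' z v => toRealPos (h.cellPos true t' z v) (fun ω hω => ⟨hω.2.1, hω.2.2.1, hω.2.2.2⟩)
  have hposE5 : ∀ t' z : Bool, 0 < (P {ω | Ts ω = t' ∧ Z ω = z}).toReal :=
    fun t' z => toRealPos (h.cellPos true t' z true) (fun ω hω => ⟨hω.2.1, hω.2.2.1⟩)
  -- integrability of eps
  have hInt : Integrable (modelEps Y Ts V α β) P := by
    have h2 : Integrable (fun ω => α (V ω) + β (V ω) * b2r (Ts ω)) P :=
      intBool2 P (fun x t => α x + β x * b2r t) h.measV h.measTstar
    refine (h.intY.sub h2).congr (ae_of_all _ fun ω => ?_)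
    show Y ω - (α (V ω) + β (V ω) * b2r (Ts ω)) = modelEps Y Ts V α β ω
    simp [modelEps]; ring
  -- set identities
  have I1 : ∀ z v : Bool, {ω | Z ω = z ∧ V ω = v} ∩ {ω | Ts ω = true}
      = {ω | Ts ω = true ∧ Z ω = z ∧ V ω = v} := by
    intro z v; ext ω; simp [Set.mem_inter_iff, Set.mem_setOf_eq]; tauto
  have I2 : ∀ z v : Bool, {ω | Z ω = z ∧ V ω = v} ∩ {ω | Ts ω = true}ᶜ
      = {ω | Ts ω = false ∧ Z ω = z ∧ V ω = v} := by
    intro z v; ext ω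
    simp [Set.mem_inter_iff, Set.mem_setOf_eq, Bool.not_eq_true]; tauto
  have IF1 : ∀ z v : Bool, {ω | T ω = true ∧ Z ω = z ∧ V ω = v} ∩ {ω | Ts ω = true}
      = {ω | Ts ω = true ∧ Z ω = z ∧ V ω = v} ∩ {ω | T ω = true} := by
    intro z v; ext ω; simp [Set.mem_inter_iff, Set.mem_setOf_eq]; tauto
  have IF0 : ∀ z v : Bool, {ω | T ω = true ∧ Z ω = z ∧ V ω = v} ∩ {ω | Ts ω = true}ᶜ
      = {ω | Ts ω = false ∧ Z ω = z ∧ V ω = v} ∩ {ω | T ω = true} := by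
    intro z v; ext ω
    simp [Set.mem_inter_iff, Set.mem_setOf_eq, Bool.not_eq_true]; tauto
  have IC : ∀ t' z v : Bool, {ω | Ts ω = t' ∧ Z ω = z ∧ V ω = v} ∩ {ω | T ω = true}
      = {ω | T ω = true ∧ Ts ω = t' ∧ Z ω = z ∧ V ω = v} := by
    intro t' z v; ext ω; simp [Set.mem_inter_iff, Set.mem_setOf_eq]; tauto
  -- measure of E2 true in terms of pStar
  have hPE2t : ∀ z v : Bool, (P {ω | Ts ω = true ∧ Z ω = z ∧ V ω = v}).toReal
      = pStar P Ts Z V z v * (P {ω | Z ω = z ∧ V ω = v}).toReal := by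
    intro z v
    rw [← I1 z v, pStar]
    exact cPr_eq _ (ne_of_gt (hposE z v))
  have hPE2f : ∀ z v : Bool, (P {ω | Ts ω = false ∧ Z ω = z ∧ V ω = v}).toReal
      = (1 - pStar P Ts Z V z v) * (P {ω | Z ω = z ∧ V ω = v}).toReal := by
    intro z v
    have hs := splitMeas P {ω | Z ω = z ∧ V ω = v} {ω | Ts ω = true} (mTs true)
    rw [I1 z v, I2 z v, hPE2t z v] at hs
    linarith [hs]
  -- exogeneity: set integrals of eps over E vanish
  have hexogInt : ∀ z v : Bool,
      ∫ ω in {ω | Z ω = z ∧ V ω = v}, modelEps Y Ts V α β ω ∂P = 0 := by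
    intro z v
    have h0 := h.exog z v
    rw [cExp, div_eq_zero_iff] at h0
    rcases h0 with h0 | h0
    · exact h0
    · exact absurd h0 (ne_of_gt (hposE z v))
  -- eps integral over E2 via a1b
  have hepsE2 : ∀ t' z v : Bool,
      ∫ ω in {ω | Ts ω = t' ∧ Z ω = z ∧ V ω = v}, modelEps Y Ts V α β ω ∂P
        = cExp P (modelEps Y Ts V α β) {ω | Ts ω = t' ∧ V ω = v}
            * (P {ω | Ts ω = t' ∧ Z ω = z ∧ V ω = v}).toReal := by
    intro t' z v
    rw [cExp_eq _ (ne_of_gt (hposE2 t' z v)), h.a1b t' z v]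
  -- e-values are zero
  have he : ∀ t' v : Bool, cExp P (modelEps Y Ts V α β) {ω | Ts ω = t' ∧ V ω = v} = 0 := by
    have hsys : ∀ z v : Bool,
        cExp P (modelEps Y Ts V α β) {ω | Ts ω = false ∧ V ω = v}
            * (1 - pStar P Ts Z V z v)
          + cExp P (modelEps Y Ts V α β) {ω | Ts ω = true ∧ V ω = v}
            * pStar P Ts Z V z v = 0 := by
      intro z v
      have hs := splitInt P _ hInt {ω | Z ω = z ∧ V ω = v} {ω | Ts ω = true}
        (mE z v) (mTs true)
      rw [I1 z v, I2 z v, hexogInt z v, hepsE2 true z v, hepsE2 false z v,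
        hPE2t z v, hPE2f z v] at hs
      have hπ := ne_of_gt (hposE z v)
      have : (cExp P (modelEps Y Ts V α β) {ω | Ts ω = false ∧ V ω = v}
            * (1 - pStar P Ts Z V z v)
          + cExp P (modelEps Y Ts V α β) {ω | Ts ω = true ∧ V ω = v}
            * pStar P Ts Z V z v) * (P {ω | Z ω = z ∧ V ω = v}).toReal = 0 := by
        linear_combination -hs
      rcases mul_eq_zero.1 this with h' | h'
      · exact h'
      · exact absurd h' hπ
    intro t' v
    have e0 := hsys false v
    have e1 := hsys true v
    have hne := sub_ne_zero.2 (h.a1c v)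
    have hxy : cExp P (modelEps Y Ts V α β) {ω | Ts ω = true ∧ V ω = v}
        = cExp P (modelEps Y Ts V α β) {ω | Ts ω = false ∧ V ω = v} := by
      have hz : (pStar P Ts Z V false v - pStar P Ts Z V true v)
          * (cExp P (modelEps Y Ts V α β) {ω | Ts ω = true ∧ V ω = v}
            - cExp P (modelEps Y Ts V α β) {ω | Ts ω = false ∧ V ω = v}) = 0 := by
        linear_combination e0 - e1
      rcases mul_eq_zero.1 hz with h' | h'
      · exact absurd h' hne
      · linarith [sub_eq_zero.1 h']
    have hx : cExp P (modelEps Y Ts V α β) {ω | Ts ω = false ∧ V ω = v} = 0 := by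
      rw [hxy] at e0; linear_combination e0
    cases t'
    · exact hx
    · rw [hxy, hx]
  -- β ≠ 0
  have hb : ∀ v : Bool, β v ≠ 0 := by
    intro v
    have := h.a1g v
    rw [he false v, he true v] at this
    simpa using this
  -- generic decomposition of ∫ Y over sets where V = v
  have hYdecomp : ∀ (G : Set Ω), MeasurableSet G → ∀ v : Bool, (∀ ω ∈ G, V ω = v) →
      ∫ ω in G, Y ω ∂P = (∫ ω in G, modelEps Y Ts V α β ω ∂P) + α v * (P G).toReal
        + β v * (P (G ∩ {ω | Ts ω = true})).toReal := by
    intro G hG v hGv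
    have hfun : ∀ ω ∈ G, Y ω = modelEps Y Ts V α β ω + (α v + β v * b2r (Ts ω)) := by
      intro ω hω; simp [modelEps, hGv ω hω]
    have hIb : Integrable (fun ω => α v + β v * b2r (Ts ω)) P :=
      intBool2 P (fun _ t => α v + β v * b2r t) h.measV h.measTstar
    rw [setIntegral_congr_fun hG hfun,
      integral_add hInt.integrableOn hIb.integrableOn]
    have hsecond : ∫ ω in G, (α v + β v * b2r (Ts ω)) ∂P
        = α v * (P G).toReal + β v * (P (G ∩ {ω | Ts ω = true})).toReal := by
      rw [splitInt P _ hIb G {ω | Ts ω = true} hG (mTs true)]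
      have c1 : ∀ ω ∈ G ∩ {ω | Ts ω = true}, α v + β v * b2r (Ts ω) = α v + β v := by
        intro ω hω
        have ht : Ts ω = true := hω.2
        rw [ht]; norm_num [b2r]
      have c0 : ∀ ω ∈ G ∩ {ω | Ts ω = true}ᶜ, α v + β v * b2r (Ts ω) = α v := by
        intro ω hω
        have ht : Ts ω = false := by
          have := hω.2; simp [Set.mem_compl_iff, Set.mem_setOf_eq] at this; exact this
        rw [ht]; norm_num [b2r]
      rw [setIntegral_congr_fun (hG.inter (mTs true)) c1,
        setIntegral_congr_fun (hG.inter (mTs true).compl) c0, intConst, intConst]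
      have hs := splitMeas P G {ω | Ts ω = true} (mTs true)
      linear_combination (-(α v)) * hs
    rw [hsecond]; ring
  -- conclusion (1): positivity  — done (hposE)
  -- conclusion (2): E[Y | Z,V]
  have con2 : ∀ z v : Bool, ∫ ω in {ω | Z ω = z ∧ V ω = v}, Y ω ∂P
      = (α v + β v * pStar P Ts Z V z v) * (P {ω | Z ω = z ∧ V ω = v}).toReal := by
    intro z v
    rw [hYdecomp {ω | Z ω = z ∧ V ω = v} (mE z v) v (fun ω hω => hω.2), hexogInt z v,
      I1 z v, hPE2t z v]
    ring
  -- measure of misclassification cells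
  have hPcellT : ∀ t' z v : Bool,
      (P ({ω | Ts ω = t' ∧ Z ω = z ∧ V ω = v} ∩ {ω | T ω = true})).toReal
        = cPr P {ω | T ω = true} {ω | Ts ω = t' ∧ Z ω = z}
            * (P {ω | Ts ω = t' ∧ Z ω = z ∧ V ω = v}).toReal := by
    intro t' z v
    rw [cPr_eq _ (ne_of_gt (hposE2 t' z v)), h.a1d t' z v]
  -- conclusion (3): P(T=1, Z,V)
  have con3 : ∀ z v : Bool, (P {ω | T ω = true ∧ Z ω = z ∧ V ω = v}).toReal
      = (cPr P {ω | T ω = true} {ω | Ts ω = false ∧ Z ω = z} * (1 - pStar P Ts Z V z v)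
          + cPr P {ω | T ω = true} {ω | Ts ω = true ∧ Z ω = z} * pStar P Ts Z V z v)
        * (P {ω | Z ω = z ∧ V ω = v}).toReal := by
    intro z v
    have hs := splitMeas P {ω | T ω = true ∧ Z ω = z ∧ V ω = v} {ω | Ts ω = true} (mTs true)
    rw [IF1 z v, IF0 z v, hPcellT true z v, hPcellT false z v, hPE2t z v, hPE2f z v] at hs
    rw [hs]; ring
  -- conclusion (4)
  have con4 : ∀ z v : Bool, ∫ ω in {ω | T ω = true ∧ Z ω = z ∧ V ω = v}, Y ω ∂P
      = α v * (P {ω | T ω = true ∧ Z ω = z ∧ V ω = v}).toReal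
        + β v * (cPr P {ω | T ω = true} {ω | Ts ω = true ∧ Z ω = z}
            * (pStar P Ts Z V z v * (P {ω | Z ω = z ∧ V ω = v}).toReal)) := by
    intro z v
    have hepsF : ∫ ω in {ω | T ω = true ∧ Z ω = z ∧ V ω = v}, modelEps Y Ts V α β ω ∂P
        = 0 := by
      have hcell : ∀ t' : Bool,
          ∫ ω in {ω | T ω = true ∧ Ts ω = t' ∧ Z ω = z ∧ V ω = v},
            modelEps Y Ts V α β ω ∂P = 0 := by
        intro t'
        have hpos := toRealPos (h.cellPos true t' z v) (subset_refl _)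
        rw [cExp_eq _ (ne_of_gt hpos), h.a1a true t' z v, h.a1b t' z v, he t' v, zero_mul]
      have hs := splitInt P _ hInt {ω | T ω = true ∧ Z ω = z ∧ V ω = v} {ω | Ts ω = true}
        (mF z v) (mTs true)
      rw [IF1 z v, IF0 z v, IC true z v, IC false z v, hcell true, hcell false] at hs
      simpa using hs
    rw [hYdecomp {ω | T ω = true ∧ Z ω = z ∧ V ω = v} (mF z v) v (fun ω hω => hω.2.2),
      hepsF, IF1 z v, hPcellT true z v, hPE2t z v]
    ring
  exact ⟨hposE, con2, con3, con4, hb⟩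

lemma obs_eq {Ω₁ Ω₂ : Type*} [MeasurableSpace Ω₁] [MeasurableSpace Ω₂]
    (P₁ : Measure Ω₁) (P₂ : Measure Ω₂)
    (Y₁ : Ω₁ → ℝ) (T₁ Z₁ V₁ : Ω₁ → Bool) (Y₂ : Ω₂ → ℝ) (T₂ Z₂ V₂ : Ω₂ → Bool)
    (hY₁ : Measurable Y₁) (hT₁ : Measurable T₁) (hZ₁ : Measurable Z₁) (hV₁ : Measurable V₁)
    (hY₂ : Measurable Y₂) (hT₂ : Measurable T₂) (hZ₂ : Measurable Z₂) (hV₂ : Measurable V₂)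
    (hobs : Measure.map (fun ω => (Y₁ ω, T₁ ω, Z₁ ω, V₁ ω)) P₁
          = Measure.map (fun ω => (Y₂ ω, T₂ ω, Z₂ ω, V₂ ω)) P₂) :
    (∀ z v : Bool, P₁ {ω | Z₁ ω = z ∧ V₁ ω = v} = P₂ {ω | Z₂ ω = z ∧ V₂ ω = v}) ∧
    (∀ z v : Bool, P₁ {ω | T₁ ω = true ∧ Z₁ ω = z ∧ V₁ ω = v}
        = P₂ {ω | T₂ ω = true ∧ Z₂ ω = z ∧ V₂ ω = v}) ∧
    (∀ z v : Bool, ∫ ω in {ω | Z₁ ω = z ∧ V₁ ω = v}, Y₁ ω ∂P₁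
        = ∫ ω in {ω | Z₂ ω = z ∧ V₂ ω = v}, Y₂ ω ∂P₂) ∧
    (∀ z v : Bool, ∫ ω in {ω | T₁ ω = true ∧ Z₁ ω = z ∧ V₁ ω = v}, Y₁ ω ∂P₁
        = ∫ ω in {ω | T₂ ω = true ∧ Z₂ ω = z ∧ V₂ ω = v}, Y₂ ω ∂P₂) := by
  have hW₁ : Measurable (fun ω => (Y₁ ω, T₁ ω, Z₁ ω, V₁ ω)) :=
    hY₁.prodMk (hT₁.prodMk (hZ₁.prodMk hV₁))
  have hW₂ : Measurable (fun ω => (Y₂ ω, T₂ ω, Z₂ ω, V₂ ω)) :=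
    hY₂.prodMk (hT₂.prodMk (hZ₂.prodMk hV₂))
  have hm3 : Measurable (fun x : ℝ × Bool × Bool × Bool => x.2.2.1) :=
    measurable_fst.comp (measurable_snd.comp measurable_snd)
  have hm4 : Measurable (fun x : ℝ × Bool × Bool × Bool => x.2.2.2) :=
    measurable_snd.comp (measurable_snd.comp measurable_snd)
  have hm2 : Measurable (fun x : ℝ × Bool × Bool × Bool => x.2.1) :=
    measurable_fst.comp measurable_snd
  have hS : ∀ z v : Bool,
      MeasurableSet {x : ℝ × Bool × Bool × Bool | x.2.2.1 = z ∧ x.2.2.2 = v} :=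
    fun z v => (hm3 (by trivial : MeasurableSet ({z} : Set Bool))).inter
      (hm4 (by trivial : MeasurableSet ({v} : Set Bool)))
  have hSt : ∀ z v : Bool,
      MeasurableSet {x : ℝ × Bool × Bool × Bool | x.2.1 = true ∧ x.2.2.1 = z ∧ x.2.2.2 = v} :=
    fun z v => (hm2 (by trivial : MeasurableSet ({true} : Set Bool))).inter
      ((hm3 (by trivial : MeasurableSet ({z} : Set Bool))).inter
        (hm4 (by trivial : MeasurableSet ({v} : Set Bool))))
  refine ⟨fun z v => ?_, fun z v => ?_, fun z v => ?_, fun z v => ?_⟩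
  · calc P₁ {ω | Z₁ ω = z ∧ V₁ ω = v}
        = (Measure.map (fun ω => (Y₁ ω, T₁ ω, Z₁ ω, V₁ ω)) P₁)
            {x | x.2.2.1 = z ∧ x.2.2.2 = v} := (Measure.map_apply hW₁ (hS z v)).symm
      _ = (Measure.map (fun ω => (Y₂ ω, T₂ ω, Z₂ ω, V₂ ω)) P₂)
            {x | x.2.2.1 = z ∧ x.2.2.2 = v} := by rw [hobs]
      _ = P₂ {ω | Z₂ ω = z ∧ V₂ ω = v} := Measure.map_apply hW₂ (hS z v)
  · calc P₁ {ω | T₁ ω = true ∧ Z₁ ω = z ∧ V₁ ω = v}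
        = (Measure.map (fun ω => (Y₁ ω, T₁ ω, Z₁ ω, V₁ ω)) P₁)
            {x | x.2.1 = true ∧ x.2.2.1 = z ∧ x.2.2.2 = v} :=
          (Measure.map_apply hW₁ (hSt z v)).symm
      _ = (Measure.map (fun ω => (Y₂ ω, T₂ ω, Z₂ ω, V₂ ω)) P₂)
            {x | x.2.1 = true ∧ x.2.2.1 = z ∧ x.2.2.2 = v} := by rw [hobs]
      _ = P₂ {ω | T₂ ω = true ∧ Z₂ ω = z ∧ V₂ ω = v} := Measure.map_apply hW₂ (hSt z v)
  · calc ∫ ω in {ω | Z₁ ω = z ∧ V₁ ω = v}, Y₁ ω ∂P₁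
        = ∫ x in {x : ℝ × Bool × Bool × Bool | x.2.2.1 = z ∧ x.2.2.2 = v}, x.1
            ∂(Measure.map (fun ω => (Y₁ ω, T₁ ω, Z₁ ω, V₁ ω)) P₁) :=
          (setIntegral_map (hS z v) measurable_fst.aestronglyMeasurable
            hW₁.aemeasurable).symm
      _ = ∫ x in {x : ℝ × Bool × Bool × Bool | x.2.2.1 = z ∧ x.2.2.2 = v}, x.1
            ∂(Measure.map (fun ω => (Y₂ ω, T₂ ω, Z₂ ω, V₂ ω)) P₂) := by rw [hobs]
      _ = ∫ ω in {ω | Z₂ ω = z ∧ V₂ ω = v}, Y₂ ω ∂P₂ :=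
          setIntegral_map (hS z v) measurable_fst.aestronglyMeasurable hW₂.aemeasurable
  · calc ∫ ω in {ω | T₁ ω = true ∧ Z₁ ω = z ∧ V₁ ω = v}, Y₁ ω ∂P₁
        = ∫ x in {x : ℝ × Bool × Bool × Bool | x.2.1 = true ∧ x.2.2.1 = z ∧ x.2.2.2 = v},
            x.1 ∂(Measure.map (fun ω => (Y₁ ω, T₁ ω, Z₁ ω, V₁ ω)) P₁) :=
          (setIntegral_map (hSt z v) measurable_fst.aestronglyMeasurable
            hW₁.aemeasurable).symm
      _ = ∫ x in {x : ℝ × Bool × Bool × Bool | x.2.1 = true ∧ x.2.2.1 = z ∧ x.2.2.2 = v},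
            x.1 ∂(Measure.map (fun ω => (Y₂ ω, T₂ ω, Z₂ ω, V₂ ω)) P₂) := by rw [hobs]
      _ = ∫ ω in {ω | T₂ ω = true ∧ Z₂ ω = z ∧ V₂ ω = v}, Y₂ ω ∂P₂ :=
          setIntegral_map (hSt z v) measurable_fst.aestronglyMeasurable hW₂.aemeasurable

/-- **Proposition 1** (identification): if two models of a misclassified endogenous
binary regressor satisfying Assumptions 1 and 2 induce the same joint distribution
of the observables `(Y, T, Z, V)`, then they have the same `α(v)` and `β(v)`, the
same misclassification probabilities `P(T = 1 | T* = t*, Z = z)`, and the same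
`P(T* = 1 | Z = z, V = v)`. -/
theorem identification_of_misclassified_endogenous_regressor
    {Ω₁ Ω₂ : Type*} [MeasurableSpace Ω₁] [MeasurableSpace Ω₂]
    (P₁ : Measure Ω₁) (P₂ : Measure Ω₂)
    (Y₁ : Ω₁ → ℝ) (T₁ Ts₁ Z₁ V₁ : Ω₁ → Bool) (α₁ β₁ : Bool → ℝ)
    (Y₂ : Ω₂ → ℝ) (T₂ Ts₂ Z₂ V₂ : Ω₂ → Bool) (α₂ β₂ : Bool → ℝ)
    (h₁ : ModelAssumptions P₁ Y₁ T₁ Ts₁ Z₁ V₁ α₁ β₁)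
    (h₂ : ModelAssumptions P₂ Y₂ T₂ Ts₂ Z₂ V₂ α₂ β₂)
    (hobs : Measure.map (fun ω => (Y₁ ω, T₁ ω, Z₁ ω, V₁ ω)) P₁
          = Measure.map (fun ω => (Y₂ ω, T₂ ω, Z₂ ω, V₂ ω)) P₂) :
    (∀ v : Bool, α₁ v = α₂ v ∧ β₁ v = β₂ v) ∧
    (∀ t' z : Bool,
      cPr P₁ {ω | T₁ ω = true} {ω | Ts₁ ω = t' ∧ Z₁ ω = z}
        = cPr P₂ {ω | T₂ ω = true} {ω | Ts₂ ω = t' ∧ Z₂ ω = z}) ∧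
    (∀ z v : Bool, pStar P₁ Ts₁ Z₁ V₁ z v = pStar P₂ Ts₂ Z₂ V₂ z v) := by
  obtain ⟨pos₁, con2₁, con3₁, con4₁, hb₁⟩ := model_facts h₁
  obtain ⟨pos₂, con2₂, con3₂, con4₂, hb₂⟩ := model_facts h₂
  obtain ⟨oπ, oQ, oIr, oIs⟩ := obs_eq P₁ P₂ Y₁ T₁ Z₁ V₁ Y₂ T₂ Z₂ V₂
    h₁.measY h₁.measT h₁.measZ h₁.measV h₂.measY h₂.measT h₂.measZ h₂.measV hobs
  have oπ' : ∀ z v : Bool, (P₁ {ω | Z₁ ω = z ∧ V₁ ω = v}).toReal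
      = (P₂ {ω | Z₂ ω = z ∧ V₂ ω = v}).toReal := fun z v => by rw [oπ z v]
  have oQ' : ∀ z v : Bool, (P₁ {ω | T₁ ω = true ∧ Z₁ ω = z ∧ V₁ ω = v}).toReal
      = (P₂ {ω | T₂ ω = true ∧ Z₂ ω = z ∧ V₂ ω = v}).toReal := fun z v => by rw [oQ z v]
  have hπne : ∀ z v : Bool, (P₁ {ω | Z₁ ω = z ∧ V₁ ω = v}).toReal ≠ 0 :=
    fun z v => ne_of_gt (pos₁ z v)
  have hQe : ∀ z v : Bool,
      cPr P₁ {ω | T₁ ω = true} {ω | Ts₁ ω = false ∧ Z₁ ω = z} * (1 - pStar P₁ Ts₁ Z₁ V₁ z v) + cPr P₁ {ω | T₁ ω = true} {ω | Ts₁ ω = true ∧ Z₁ ω = z} * pStar P₁ Ts₁ Z₁ V₁ z v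
        = cPr P₂ {ω | T₂ ω = true} {ω | Ts₂ ω = false ∧ Z₂ ω = z} * (1 - pStar P₂ Ts₂ Z₂ V₂ z v) + cPr P₂ {ω | T₂ ω = true} {ω | Ts₂ ω = true ∧ Z₂ ω = z} * pStar P₂ Ts₂ Z₂ V₂ z v := by
    intro z v
    have e₁ := con3₁ z v
    have e₂ := con3₂ z v
    rw [← oQ' z v, ← oπ' z v] at e₂
    exact mul_right_cancel₀ (hπne z v) (e₁.symm.trans e₂)
  have hRe : ∀ z v : Bool,
      α₁ v + β₁ v * pStar P₁ Ts₁ Z₁ V₁ z v = α₂ v + β₂ v * pStar P₂ Ts₂ Z₂ V₂ z v := by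
    intro z v
    have e₁ := con2₁ z v
    have e₂ := con2₂ z v
    rw [← oπ' z v, ← oIr z v] at e₂
    exact mul_right_cancel₀ (hπne z v) (e₁.symm.trans e₂)
  have hSe : ∀ z v : Bool,
      α₁ v * (cPr P₁ {ω | T₁ ω = true} {ω | Ts₁ ω = false ∧ Z₁ ω = z} * (1 - pStar P₁ Ts₁ Z₁ V₁ z v) + cPr P₁ {ω | T₁ ω = true} {ω | Ts₁ ω = true ∧ Z₁ ω = z} * pStar P₁ Ts₁ Z₁ V₁ z v) + β₁ v * (cPr P₁ {ω | T₁ ω = true} {ω | Ts₁ ω = true ∧ Z₁ ω = z} * pStar P₁ Ts₁ Z₁ V₁ z v)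
        = α₂ v * (cPr P₂ {ω | T₂ ω = true} {ω | Ts₂ ω = false ∧ Z₂ ω = z} * (1 - pStar P₂ Ts₂ Z₂ V₂ z v) + cPr P₂ {ω | T₂ ω = true} {ω | Ts₂ ω = true ∧ Z₂ ω = z} * pStar P₂ Ts₂ Z₂ V₂ z v) + β₂ v * (cPr P₂ {ω | T₂ ω = true} {ω | Ts₂ ω = true ∧ Z₂ ω = z} * pStar P₂ Ts₂ Z₂ V₂ z v) := by
    intro z v
    have e₁ := con4₁ z v
    have e₂ := con4₂ z v
    rw [← oQ' z v, ← oπ' z v, ← oIs z v] at e₂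
    have e₃ := e₁.symm.trans e₂
    rw [con3₁ z v] at e₃
    have e₄ : (α₁ v * (cPr P₁ {ω | T₁ ω = true} {ω | Ts₁ ω = false ∧ Z₁ ω = z} * (1 - pStar P₁ Ts₁ Z₁ V₁ z v) + cPr P₁ {ω | T₁ ω = true} {ω | Ts₁ ω = true ∧ Z₁ ω = z} * pStar P₁ Ts₁ Z₁ V₁ z v)
          + β₁ v * (cPr P₁ {ω | T₁ ω = true} {ω | Ts₁ ω = true ∧ Z₁ ω = z} * pStar P₁ Ts₁ Z₁ V₁ z v)) * (P₁ {ω | Z₁ ω = z ∧ V₁ ω = v}).toReal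
        = (α₂ v * (cPr P₂ {ω | T₂ ω = true} {ω | Ts₂ ω = false ∧ Z₂ ω = z} * (1 - pStar P₂ Ts₂ Z₂ V₂ z v) + cPr P₂ {ω | T₂ ω = true} {ω | Ts₂ ω = true ∧ Z₂ ω = z} * pStar P₂ Ts₂ Z₂ V₂ z v)
          + β₂ v * (cPr P₂ {ω | T₂ ω = true} {ω | Ts₂ ω = true ∧ Z₂ ω = z} * pStar P₂ Ts₂ Z₂ V₂ z v)) * (P₁ {ω | Z₁ ω = z ∧ V₁ ω = v}).toReal := by
      linear_combination e₃ + α₂ v * (P₁ {ω | Z₁ ω = z ∧ V₁ ω = v}).toReal * hQe z v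
    exact mul_right_cancel₀ (hπne z v) e₄
  have hK : pStar P₁ Ts₁ Z₁ V₁ false false * pStar P₁ Ts₁ Z₁ V₁ true true * (1 - pStar P₁ Ts₁ Z₁ V₁ false true) * (1 - pStar P₁ Ts₁ Z₁ V₁ true false)
      - pStar P₁ Ts₁ Z₁ V₁ false true * pStar P₁ Ts₁ Z₁ V₁ true false * (1 - pStar P₁ Ts₁ Z₁ V₁ false false) * (1 - pStar P₁ Ts₁ Z₁ V₁ true true) ≠ 0 := by
    intro h0
    apply h₁.a2
    have hd1 : (1 - pStar P₁ Ts₁ Z₁ V₁ true false) * (1 - pStar P₁ Ts₁ Z₁ V₁ false true) ≠ 0 :=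
      mul_ne_zero
        (by intro hc; have := (h₁.a1h true false).2; linarith)
        (by intro hc; have := (h₁.a1h false true).2; linarith)
    have hd2 : pStar P₁ Ts₁ Z₁ V₁ true false * pStar P₁ Ts₁ Z₁ V₁ false true ≠ 0 :=
      mul_ne_zero (ne_of_gt (h₁.a1h true false).1) (ne_of_gt (h₁.a1h false true).1)
    rw [div_eq_div_iff hd1 hd2]
    linear_combination -h0
  obtain ⟨cA0, cA1, cB0, cB1, cM00, cM01, cN0, cN1, cP00, cP01, cP10, cP11⟩ :=
    algebra_key (α₁ false) (α₁ true) (β₁ false) (β₁ true)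
      (cPr P₁ {ω | T₁ ω = true} {ω | Ts₁ ω = false ∧ Z₁ ω = false}) (cPr P₁ {ω | T₁ ω = true} {ω | Ts₁ ω = false ∧ Z₁ ω = true}) (cPr P₁ {ω | T₁ ω = true} {ω | Ts₁ ω = true ∧ Z₁ ω = false}) (cPr P₁ {ω | T₁ ω = true} {ω | Ts₁ ω = true ∧ Z₁ ω = true})
      (pStar P₁ Ts₁ Z₁ V₁ false false) (pStar P₁ Ts₁ Z₁ V₁ false true) (pStar P₁ Ts₁ Z₁ V₁ true false) (pStar P₁ Ts₁ Z₁ V₁ true true)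
      (α₂ false) (α₂ true) (β₂ false) (β₂ true)
      (cPr P₂ {ω | T₂ ω = true} {ω | Ts₂ ω = false ∧ Z₂ ω = false}) (cPr P₂ {ω | T₂ ω = true} {ω | Ts₂ ω = false ∧ Z₂ ω = true}) (cPr P₂ {ω | T₂ ω = true} {ω | Ts₂ ω = true ∧ Z₂ ω = false}) (cPr P₂ {ω | T₂ ω = true} {ω | Ts₂ ω = true ∧ Z₂ ω = true})
      (pStar P₂ Ts₂ Z₂ V₂ false false) (pStar P₂ Ts₂ Z₂ V₂ false true) (pStar P₂ Ts₂ Z₂ V₂ true false) (pStar P₂ Ts₂ Z₂ V₂ true true)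
      (by linear_combination hQe false false) (by linear_combination hQe false true)
      (by linear_combination hQe true false) (by linear_combination hQe true true)
      (hRe false false) (hRe false true) (hRe true false) (hRe true true)
      (by linear_combination hSe false false) (by linear_combination hSe false true)
      (by linear_combination hSe true false) (by linear_combination hSe true true)
      (hb₁ false) (hb₁ true)
      (h₁.a1f false).2.1 (h₁.a1f true).2.1 (h₂.a1f false).2.1
      (h₁.a1h false false).1 (h₁.a1h false false).2
      (h₁.a1h false true).1 (h₁.a1h false true).2
      (h₁.a1h true false).1 (h₁.a1h true false).2
      (h₁.a1h true true).1 (h₁.a1h true true).2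
      (h₂.a1h false false).1 (h₂.a1h false false).2
      hK
  refine ⟨fun v => ?_, fun t' z => ?_, fun z v => ?_⟩
  · cases v
    · exact ⟨cA0.symm, cB0.symm⟩
    · exact ⟨cA1.symm, cB1.symm⟩
  · cases t' <;> cases z
    · exact cM00.symm
    · exact cM01.symm
    · exact cN0.symm
    · exact cN1.symm
  · cases z <;> cases v
    · exact cP00.symm
    · exact cP01.symm
    · exact cP10.symm
    · exact cP11.symm
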